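/- Let p be a monic complex polynomial of degree d ≥ 1 all of whose roots are nonnegative real numbers. Then, with convergence meaning coefficientwise convergence of polynomials as m → ∞: (i) if ã_1(p) < 1, then p^{⊠_d m} → x^d; (ii) if ã_1(p) = 1 and ã_2(p) < 1, then p^{⊠_d m} → x^d − d·x^{d−1}; (iii) if ã_1(p) = 1 and ã_2(p) = 1, then p(x) = (x−1)^d, and hence p^{⊠_d m} = (x−1)^d for every m. -/

import Mathlib

open Finset Filter

/-- For `p(x) = Σ_{i=0}^d a_i x^{d-i}`, `atilde d p i = (-1)^i * (d.choose i)⁻¹ * a_i`. -/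
noncomputable def atilde (d : ℕ) (p : Polynomial ℂ) (i : ℕ) : ℂ :=
  (-1) ^ i * ((d.choose i : ℂ))⁻¹ * p.coeff (d - i)

/-- Finite free multiplicative convolution of degree-`d` polynomials. -/
noncomputable def ffmul (d : ℕ) (p q : Polynomial ℂ) : Polynomial ℂ :=
  ∑ i ∈ Finset.range (d + 1),
    Polynomial.C ((-1) ^ i * (d.choose i : ℂ) * atilde d p i * atilde d q i) *
      Polynomial.X ^ (d - i)

/-- The `m`-fold finite free multiplicative convolution power `p^{⊠_d m}`;
the empty convolution is the identity `(x-1)^d` for `⊠_d`. -/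
noncomputable def ffpow (d : ℕ) (p : Polynomial ℂ) : ℕ → Polynomial ℂ
  | 0 => (Polynomial.X - 1) ^ d
  | m + 1 => ffmul d (ffpow d p m) p

/-- tangent line inequality for x^i at u, evaluated at v. -/
lemma tangent_le {u v : ℝ} (hu : 0 ≤ u) (hv : 0 ≤ v) (i : ℕ) :
    u ^ i + i * u ^ (i - 1) * (v - u) ≤ v ^ i := by
  rcases i with _ | n
  · simp
  · have hgeom : (∑ k ∈ Finset.range (n + 1), v ^ k * u ^ (n - k)) * (v - u)
        = v ^ (n + 1) - u ^ (n + 1) := geom_sum₂_mul v u (n + 1)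
    have hcard : ((n:ℝ) + 1) * u ^ n = ∑ k ∈ Finset.range (n + 1), u ^ n := by
      simp [mul_comm]
    rcases le_total u v with h | h
    · have hterm : ∀ k ∈ Finset.range (n + 1), u ^ n ≤ v ^ k * u ^ (n - k) := by
        intro k hk
        rw [Finset.mem_range] at hk
        calc u ^ n = u ^ k * u ^ (n - k) := by rw [← pow_add]; congr 1; omega
        _ ≤ v ^ k * u ^ (n - k) := by
            apply mul_le_mul_of_nonneg_right (pow_le_pow_left₀ hu h k) (pow_nonneg hu _)
      have hsum : ((n:ℝ) + 1) * u ^ n ≤ ∑ k ∈ Finset.range (n + 1), v ^ k * u ^ (n - k) := by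
        rw [hcard]; exact Finset.sum_le_sum hterm
      have := mul_le_mul_of_nonneg_right hsum (by linarith : (0:ℝ) ≤ v - u)
      rw [hgeom] at this
      have : u ^ (n+1) + ((n:ℝ)+1) * u ^ n * (v - u) ≤ v ^ (n+1) := by linarith
      simpa using this
    · have hterm : ∀ k ∈ Finset.range (n + 1), v ^ k * u ^ (n - k) ≤ u ^ n := by
        intro k hk
        rw [Finset.mem_range] at hk
        calc v ^ k * u ^ (n - k) ≤ u ^ k * u ^ (n - k) := by
              apply mul_le_mul_of_nonneg_right (pow_le_pow_left₀ hv h k) (pow_nonneg hu _)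
        _ = u ^ n := by rw [← pow_add]; congr 1; omega
      have hsum : (∑ k ∈ Finset.range (n + 1), v ^ k * u ^ (n - k)) ≤ ((n:ℝ) + 1) * u ^ n := by
        rw [hcard]; exact Finset.sum_le_sum hterm
      have := mul_le_mul_of_nonpos_right hsum (by linarith : v - u ≤ (0:ℝ))
      rw [hgeom] at this
      have : u ^ (n+1) + ((n:ℝ)+1) * u ^ n * (v - u) ≤ v ^ (n+1) := by linarith
      simpa using this

lemma tangent_lt {u v : ℝ} (hu : 0 ≤ u) (hv : 0 ≤ v) (huv : u ≠ v) {i : ℕ} (hi : 2 ≤ i) :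
    u ^ i + i * u ^ (i - 1) * (v - u) < v ^ i := by
  obtain ⟨n, rfl⟩ : ∃ n, i = n + 2 := ⟨i - 2, by omega⟩
  rcases eq_or_lt_of_le hu with h0 | hupos
  · -- u = 0
    have hv0 : 0 < v := lt_of_le_of_ne hv (by rw [← h0] at huv; exact huv)
    rw [← h0]
    have e1 : (0:ℝ) ^ (n+2) = 0 := by simp
    have e2 : (0:ℝ) ^ (n + 2 - 1) = 0 := by simp
    rw [e1, e2]
    have : (0:ℝ) < v ^ (n+2) := by positivity
    linarith
  · -- u > 0
    have hgeom : (∑ k ∈ Finset.range (n + 2), v ^ k * u ^ (n + 1 - k)) * (v - u)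
        = v ^ (n + 2) - u ^ (n + 2) := geom_sum₂_mul v u (n + 2)
    have hcard : ((n:ℝ) + 2) * u ^ (n+1) = ∑ _k ∈ Finset.range (n + 2), u ^ (n+1) := by
      rw [Finset.sum_const, Finset.card_range, nsmul_eq_mul]; push_cast; ring
    rcases lt_or_gt_of_ne huv with h | h
    · -- u < v
      have hterm : ∀ k ∈ Finset.range (n + 2), u ^ (n+1) ≤ v ^ k * u ^ (n + 1 - k) := by
        intro k hk
        rw [Finset.mem_range] at hk
        calc u ^ (n+1) = u ^ k * u ^ (n + 1 - k) := by rw [← pow_add]; congr 1; omega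
        _ ≤ v ^ k * u ^ (n + 1 - k) := by
            apply mul_le_mul_of_nonneg_right (pow_le_pow_left₀ hu h.le k) (pow_nonneg hu _)
      have hstrict : u ^ (n+1) < v ^ (n+1) * u ^ (n + 1 - (n+1)) := by
        simp only [Nat.sub_self, pow_zero, mul_one]
        exact pow_lt_pow_left₀ h hu (by omega)
      have hsum : ((n:ℝ) + 2) * u ^ (n+1) < ∑ k ∈ Finset.range (n + 2), v ^ k * u ^ (n + 1 - k) := by
        rw [hcard]
        apply Finset.sum_lt_sum hterm ⟨n+1, Finset.mem_range.2 (by omega), hstrict⟩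
      have := mul_lt_mul_of_pos_right hsum (by linarith : (0:ℝ) < v - u)
      rw [hgeom] at this
      have h2 : u ^ (n+2) + ((n:ℝ)+2) * u ^ (n+1) * (v - u) < v ^ (n+2) := by linarith
      have : ((n:ℝ)+2) = ((n+2 : ℕ) : ℝ) := by push_cast; ring
      rw [this] at h2
      simpa using h2
    · -- v < u
      have hterm : ∀ k ∈ Finset.range (n + 2), v ^ k * u ^ (n + 1 - k) ≤ u ^ (n+1) := by
        intro k hk
        rw [Finset.mem_range] at hk
        calc v ^ k * u ^ (n + 1 - k) ≤ u ^ k * u ^ (n + 1 - k) := by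
              apply mul_le_mul_of_nonneg_right (pow_le_pow_left₀ hv h.le k) (pow_nonneg hu _)
        _ = u ^ (n+1) := by rw [← pow_add]; congr 1; omega
      have hstrict : v ^ (n+1) * u ^ (n + 1 - (n+1)) < u ^ (n+1) := by
        simp only [Nat.sub_self, pow_zero, mul_one]
        exact pow_lt_pow_left₀ h hv (by omega)
      have hsum : (∑ k ∈ Finset.range (n + 2), v ^ k * u ^ (n + 1 - k)) < ((n:ℝ) + 2) * u ^ (n+1) := by
        rw [hcard]
        apply Finset.sum_lt_sum hterm ⟨n+1, Finset.mem_range.2 (by omega), hstrict⟩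
      have := mul_lt_mul_of_neg_right hsum (by linarith : v - u < (0:ℝ))
      rw [hgeom] at this
      have h2 : u ^ (n+2) + ((n:ℝ)+2) * u ^ (n+1) * (v - u) < v ^ (n+2) := by linarith
      have : ((n:ℝ)+2) = ((n+2 : ℕ) : ℝ) := by push_cast; ring
      rw [this] at h2
      simpa using h2

lemma keyK_identity (n k : ℕ) (u t v : ℝ) (hveq : ((n:ℝ)+1)*(v-u) = t - u) :
    ((n+1).choose (k+1) : ℝ) * (u ^ (k+1) + (k+1) * u ^ k * (v - u))
      = (n.choose (k+1) : ℝ) * u ^ (k+1) + t * (n.choose k : ℝ) * u ^ k := by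
  have hc1 : ((n+1:ℕ) : ℝ) * (n.choose k : ℝ) = ((n+1).choose (k+1) : ℝ) * ((k+1:ℕ) : ℝ) := by
    exact_mod_cast congrArg (Nat.cast (R := ℝ)) (Nat.add_one_mul_choose_eq n k)
  have hc2 : (((n+1).choose (k+1) : ℕ) : ℝ) = (n.choose k : ℝ) + (n.choose (k+1) : ℝ) := by
    exact_mod_cast congrArg (Nat.cast (R := ℝ)) (Nat.choose_succ_succ n k)
  push_cast at hc1 hc2 ⊢
  linear_combination u^(k+1)*hc2 - u^k*(v-u)*hc1 + (n.choose k : ℝ)*u^k*hveq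

lemma keyK (n k : ℕ) {u t : ℝ} (hu : 0 ≤ u) (ht : 0 ≤ t) :
    (n.choose (k+1) : ℝ) * u ^ (k+1) + t * (n.choose k : ℝ) * u ^ k
      ≤ ((n+1).choose (k+1) : ℝ) * (((n:ℝ)*u + t)/((n:ℝ)+1)) ^ (k+1) := by
  set v : ℝ := ((n:ℝ)*u + t)/((n:ℝ)+1) with hv
  have hv0 : 0 ≤ v := by positivity
  have h1 := tangent_le hu hv0 (k+1)
  have h2 : (u ^ (k+1) + ((k+1:ℕ):ℝ) * u ^ (k+1-1) * (v - u)) = u ^ (k+1) + (k+1) * u ^ k * (v - u) := by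
    norm_num
  rw [h2] at h1
  have hveq : ((n:ℝ)+1)*(v-u) = t - u := by
    rw [hv]; field_simp; ring
  calc (n.choose (k+1) : ℝ) * u ^ (k+1) + t * (n.choose k : ℝ) * u ^ k
      = ((n+1).choose (k+1) : ℝ) * (u ^ (k+1) + (k+1) * u ^ k * (v - u)) := (keyK_identity n k u t v hveq).symm
    _ ≤ ((n+1).choose (k+1) : ℝ) * v ^ (k+1) := by
        apply mul_le_mul_of_nonneg_left h1 (by positivity)

lemma keyK_strict (n k : ℕ) (hk : 1 ≤ k) (hkn : k + 1 ≤ n + 1) {u t : ℝ}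
    (hu : 0 ≤ u) (ht : 0 ≤ t) (hne : t ≠ u) :
    (n.choose (k+1) : ℝ) * u ^ (k+1) + t * (n.choose k : ℝ) * u ^ k
      < ((n+1).choose (k+1) : ℝ) * (((n:ℝ)*u + t)/((n:ℝ)+1)) ^ (k+1) := by
  set v : ℝ := ((n:ℝ)*u + t)/((n:ℝ)+1) with hv
  have hv0 : 0 ≤ v := by positivity
  have hne' : u ≠ v := by
    intro h
    apply hne
    have hn : ((n:ℝ) + 1) ≠ 0 := by positivity
    rw [hv, eq_div_iff hn] at h
    linarith
  have h1 := tangent_lt hu hv0 hne' (by omega : 2 ≤ k+1)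
  have h2 : (u ^ (k+1) + ((k+1:ℕ):ℝ) * u ^ (k+1-1) * (v - u)) = u ^ (k+1) + (k+1) * u ^ k * (v - u) := by
    norm_num
  rw [h2] at h1
  have hcpos : (0:ℝ) < ((n+1).choose (k+1) : ℝ) := by
    exact_mod_cast Nat.cast_pos.2 (Nat.choose_pos (by omega))
  have hveq : ((n:ℝ)+1)*(v-u) = t - u := by
    rw [hv]; field_simp; ring
  calc (n.choose (k+1) : ℝ) * u ^ (k+1) + t * (n.choose k : ℝ) * u ^ k
      = ((n+1).choose (k+1) : ℝ) * (u ^ (k+1) + (k+1) * u ^ k * (v - u)) := (keyK_identity n k u t v hveq).symm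
    _ < ((n+1).choose (k+1) : ℝ) * v ^ (k+1) := by
        apply mul_lt_mul_of_pos_left h1 hcpos

lemma esymm_cons (a : ℝ) (s : Multiset ℝ) (k : ℕ) :
    (a ::ₘ s).esymm (k+1) = s.esymm (k+1) + a * s.esymm k := by
  rw [Multiset.esymm, Multiset.powersetCard_cons, Multiset.map_add, Multiset.sum_add,
    Multiset.map_map]
  congr 1
  rw [Multiset.esymm, ← Multiset.sum_map_mul_left]
  congr 1
  apply Multiset.map_congr rfl
  intro x _
  simp [Multiset.prod_cons]

lemma esymm_nonneg {s : Multiset ℝ} (h : ∀ x ∈ s, 0 ≤ x) (k : ℕ) : 0 ≤ s.esymm k := by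
  apply Multiset.sum_nonneg
  intro x hx
  rw [Multiset.mem_map] at hx
  obtain ⟨t, ht, rfl⟩ := hx
  rw [Multiset.mem_powersetCard] at ht
  exact Multiset.prod_nonneg (fun y hy => h y (Multiset.mem_of_le ht.1 hy))

lemma esymm_zero' (s : Multiset ℝ) : s.esymm 0 = 1 := by
  simp [Multiset.esymm, Multiset.powersetCard_zero_left]

lemma esymm_one' (s : Multiset ℝ) : s.esymm 1 = s.sum := by
  simp [Multiset.esymm, Multiset.powersetCard_one, Multiset.map_map]

lemma esymm_card_lt {s : Multiset ℝ} {k : ℕ} (h : Multiset.card s < k) : s.esymm k = 0 := by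
  rw [Multiset.esymm]
  have : s.powersetCard k = 0 := by
    rw [← Multiset.card_eq_zero, Multiset.card_powersetCard, Nat.choose_eq_zero_of_lt h]
  rw [this]
  simp

lemma maclaurin (s : Multiset ℝ) (h0 : ∀ x ∈ s, 0 ≤ x) (i : ℕ) :
    s.esymm i * (Multiset.card s : ℝ) ^ i ≤ ((Multiset.card s).choose i : ℝ) * s.sum ^ i := by
  induction s using Multiset.induction_on generalizing i with
  | empty =>
    rcases i with _ | k
    · simp [esymm_zero']
    · simp [esymm_card_lt (by simp : Multiset.card (0 : Multiset ℝ) < k + 1)]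
  | cons a t IH =>
    have ha : 0 ≤ a := h0 a (Multiset.mem_cons_self a t)
    have ht0 : ∀ x ∈ t, 0 ≤ x := fun x hx => h0 x (Multiset.mem_cons_of_mem hx)
    rcases i with _ | k
    · simp [esymm_zero']
    · rw [Multiset.card_cons, Multiset.sum_cons, esymm_cons]
      set n := Multiset.card t with hn
      rcases Nat.eq_zero_or_pos n with hn0 | hnpos
      · -- t is empty
        have ht : t = 0 := Multiset.card_eq_zero.1 hn0
        subst ht
        rcases k with _ | k'
        · simp only [esymm_zero', esymm_card_lt (by simp : Multiset.card (0:Multiset ℝ) < 1)]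
          simp only [Multiset.sum_zero, hn0]
          norm_num
        · rw [esymm_card_lt (by simp : Multiset.card (0:Multiset ℝ) < k'+2),
            esymm_card_lt (by simp : Multiset.card (0:Multiset ℝ) < k'+1)]
          simp only [hn0]
          have : (0:ℝ) ≤ (((0+1).choose (k'+2) : ℕ) : ℝ) * (0 + a)^(k'+2) := by positivity
          simpa using this
      · -- t nonempty
        have hnR : (0:ℝ) < (n:ℝ) := by exact_mod_cast hnpos
        set u : ℝ := t.sum / n with hu
        have hu0 : 0 ≤ u := div_nonneg (Multiset.sum_nonneg ht0) hnR.le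
        have hsum : t.sum = (n:ℝ) * u := by rw [hu]; field_simp [hnR.ne']
        have IH1 : t.esymm (k+1) ≤ (n.choose (k+1) : ℝ) * u ^ (k+1) := by
          have := IH ht0 (k+1)
          rw [hsum] at this
          rw [mul_pow] at this
          have hpow : (0:ℝ) < (n:ℝ) ^ (k+1) := by positivity
          apply le_of_mul_le_mul_right _ hpow
          calc t.esymm (k+1) * (n:ℝ)^(k+1) ≤ (n.choose (k+1) : ℝ) * ((n:ℝ)^(k+1) * u^(k+1)) := this
            _ = (n.choose (k+1) : ℝ) * u ^ (k+1) * (n:ℝ)^(k+1) := by ring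
        have IH2 : t.esymm k ≤ (n.choose k : ℝ) * u ^ k := by
          have := IH ht0 k
          rw [hsum] at this
          rw [mul_pow] at this
          have hpow : (0:ℝ) < (n:ℝ) ^ k := by positivity
          apply le_of_mul_le_mul_right _ hpow
          calc t.esymm k * (n:ℝ)^k ≤ (n.choose k : ℝ) * ((n:ℝ)^k * u^k) := this
            _ = (n.choose k : ℝ) * u ^ k * (n:ℝ)^k := by ring
        have step1 : t.esymm (k+1) + a * t.esymm k
            ≤ (n.choose (k+1) : ℝ) * u ^ (k+1) + a * ((n.choose k : ℝ) * u ^ k) :=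
          add_le_add IH1 (mul_le_mul_of_nonneg_left IH2 ha)
        have step2 := keyK n k hu0 ha
        have hfin : t.esymm (k+1) + a * t.esymm k
            ≤ ((n+1).choose (k+1) : ℝ) * (((n:ℝ)*u + a)/((n:ℝ)+1)) ^ (k+1) := by
          calc t.esymm (k+1) + a * t.esymm k
              ≤ (n.choose (k+1) : ℝ) * u ^ (k+1) + a * ((n.choose k : ℝ) * u ^ k) := step1
            _ = (n.choose (k+1) : ℝ) * u ^ (k+1) + a * (n.choose k : ℝ) * u ^ k := by ring
            _ ≤ ((n+1).choose (k+1) : ℝ) * (((n:ℝ)*u + a)/((n:ℝ)+1)) ^ (k+1) := step2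
        have hmul := mul_le_mul_of_nonneg_right hfin (by positivity : (0:ℝ) ≤ ((n:ℝ)+1)^(k+1))
        have hne : ((n:ℝ)+1) ≠ 0 := by positivity
        have heq : ((n+1).choose (k+1) : ℝ) * (((n:ℝ)*u + a)/((n:ℝ)+1)) ^ (k+1) * ((n:ℝ)+1)^(k+1)
            = ((n+1).choose (k+1) : ℝ) * (a + (n:ℝ)*u) ^ (k+1) := by
          rw [div_pow, mul_assoc, div_mul_cancel₀ _ (by positivity : ((n:ℝ)+1)^(k+1) ≠ 0)]
          ring
        rw [heq] at hmul
        have hc : ((Multiset.card (a ::ₘ t)) : ℝ) = (n:ℝ) + 1 := by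
          simp [hn]
        calc (t.esymm (k+1) + a * t.esymm k) * ((n+1 : ℕ):ℝ)^(k+1)
            = (t.esymm (k+1) + a * t.esymm k) * (((n:ℝ)+1))^(k+1) := by push_cast; ring
          _ ≤ ((n+1).choose (k+1) : ℝ) * (a + (n:ℝ)*u) ^ (k+1) := hmul
          _ = ((n+1).choose (k+1) : ℝ) * (a + t.sum) ^ (k+1) := by rw [← hsum]

lemma maclaurin_strict (s : Multiset ℝ) (h0 : ∀ x ∈ s, 0 ≤ x) (d : ℕ)
    (hcard : Multiset.card s = d) (hsum : s.sum = (d:ℝ))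
    {a : ℝ} (has : a ∈ s) (ha1 : a ≠ 1) {i : ℕ} (hi2 : 2 ≤ i) (hid : i ≤ d) :
    s.esymm i < (d.choose i : ℝ) := by
  obtain ⟨k, rfl⟩ : ∃ k, i = k + 1 := ⟨i - 1, by omega⟩
  have hk1 : 1 ≤ k := by omega
  set t := s.erase a with htdef
  have hcons : a ::ₘ t = s := Multiset.cons_erase has
  have ht0 : ∀ x ∈ t, 0 ≤ x := fun x hx => h0 x (Multiset.mem_of_mem_erase hx)
  have ha0 : 0 ≤ a := h0 a has
  have hcardt : Multiset.card t = d - 1 := by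
    rw [htdef, Multiset.card_erase_of_mem has, hcard, Nat.pred_eq_sub_one]
  set n := d - 1 with hndef
  have hd1 : 1 ≤ d := by omega
  have hnd : n + 1 = d := by omega
  have hsumt : t.sum = (d:ℝ) - a := by
    have : (a ::ₘ t).sum = s.sum := by rw [hcons]
    rw [Multiset.sum_cons, hsum] at this
    linarith
  have hnpos : 1 ≤ n := by omega
  have hnR : (0:ℝ) < (n:ℝ) := by exact_mod_cast hnpos
  set u : ℝ := t.sum / n with hu
  have hu0 : 0 ≤ u := div_nonneg (Multiset.sum_nonneg ht0) hnR.le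
  have hsumu : t.sum = (n:ℝ) * u := by rw [hu]; field_simp [hnR.ne']
  have IH1 : t.esymm (k+1) ≤ (n.choose (k+1) : ℝ) * u ^ (k+1) := by
    have := maclaurin t ht0 (k+1)
    rw [hcardt, hsumu, mul_pow] at this
    have hpow : (0:ℝ) < (n:ℝ) ^ (k+1) := by positivity
    apply le_of_mul_le_mul_right _ hpow
    calc t.esymm (k+1) * (n:ℝ)^(k+1) ≤ (n.choose (k+1) : ℝ) * ((n:ℝ)^(k+1) * u^(k+1)) := this
      _ = (n.choose (k+1) : ℝ) * u ^ (k+1) * (n:ℝ)^(k+1) := by ring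
  have IH2 : t.esymm k ≤ (n.choose k : ℝ) * u ^ k := by
    have := maclaurin t ht0 k
    rw [hcardt, hsumu, mul_pow] at this
    have hpow : (0:ℝ) < (n:ℝ) ^ k := by positivity
    apply le_of_mul_le_mul_right _ hpow
    calc t.esymm k * (n:ℝ)^k ≤ (n.choose k : ℝ) * ((n:ℝ)^k * u^k) := this
      _ = (n.choose k : ℝ) * u ^ k * (n:ℝ)^k := by ring
  have hne : a ≠ u := by
    intro h
    apply ha1
    have : (n:ℝ) * u = (d:ℝ) - a := by rw [← hsumu, hsumt]
    rw [← h] at this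
    have hd : ((n:ℝ) + 1) = (d:ℝ) := by
      have : ((n+1 : ℕ):ℝ) = (d:ℝ) := by exact_mod_cast congrArg (Nat.cast (R:=ℝ)) hnd
      push_cast at this; linarith
    have : a * ((n:ℝ)+1) = (d:ℝ) := by linarith [this]
    rw [hd] at this
    have hdR : (0:ℝ) < (d:ℝ) := by exact_mod_cast hd1
    field_simp at this
    linarith
  have hkey := keyK_strict n k hk1 (by omega) hu0 ha0 hne
  have hveq : ((n:ℝ)*u + a)/((n:ℝ)+1) = 1 := by
    rw [← hsumu, hsumt]
    have hd : ((n:ℝ) + 1) = (d:ℝ) := by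
      have : ((n+1 : ℕ):ℝ) = (d:ℝ) := by exact_mod_cast congrArg (Nat.cast (R:=ℝ)) hnd
      push_cast at this; linarith
    rw [hd]
    have hdR : (0:ℝ) < (d:ℝ) := by exact_mod_cast hd1
    field_simp
    ring
  rw [hveq] at hkey
  have hstep : s.esymm (k+1) = t.esymm (k+1) + a * t.esymm k := by
    rw [← hcons, esymm_cons]
  rw [hstep]
  have hchoose : ((n+1).choose (k+1) : ℝ) = (d.choose (k+1) : ℝ) := by
    rw [hnd]
  calc t.esymm (k+1) + a * t.esymm k
      ≤ (n.choose (k+1) : ℝ) * u ^ (k+1) + a * (n.choose k : ℝ) * u ^ k := by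
        have := add_le_add IH1 (mul_le_mul_of_nonneg_left IH2 ha0)
        calc t.esymm (k+1) + a * t.esymm k
            ≤ (n.choose (k+1) : ℝ) * u ^ (k+1) + a * ((n.choose k : ℝ) * u ^ k) := this
          _ = (n.choose (k+1) : ℝ) * u ^ (k+1) + a * (n.choose k : ℝ) * u ^ k := by ring
    _ < ((n+1).choose (k+1) : ℝ) * 1 ^ (k+1) := hkey
    _ = (d.choose (k+1) : ℝ) := by rw [hchoose]; ring

lemma sq_sum_esymm (s : Multiset ℝ) :
    s.sum ^ 2 = (s.map (fun x => x^2)).sum + 2 * s.esymm 2 := by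
  induction s using Multiset.induction_on with
  | empty => simp [esymm_card_lt (by simp : Multiset.card (0:Multiset ℝ) < 2)]
  | cons a t IH =>
    have h2 : (2:ℕ) = 1 + 1 := rfl
    rw [Multiset.sum_cons, Multiset.map_cons, Multiset.sum_cons]
    rw [show ((2:ℕ) = 1+1) from rfl, esymm_cons, esymm_one']
    ring_nf
    ring_nf at IH
    nlinarith [IH]

lemma esymm_map_hom (s : Multiset ℝ) (i : ℕ) :
    (s.map (fun x : ℝ => (x : ℂ))).esymm i = ((s.esymm i : ℝ) : ℂ) := by
  rw [Multiset.esymm, Multiset.esymm, Multiset.powersetCard_map, Multiset.map_map]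
  rw [show ((Multiset.sum (s.powersetCard i |>.map Multiset.prod) : ℝ) : ℂ)
      = Complex.ofRealHom (Multiset.sum (s.powersetCard i |>.map Multiset.prod)) from rfl]
  rw [map_multiset_sum, Multiset.map_map]
  congr 1
  apply Multiset.map_congr rfl
  intro x _
  simp only [Function.comp_apply]
  exact (map_multiset_prod Complex.ofRealHom x).symm

lemma coeff_X_sub_one_pow (d j : ℕ) :
    (((Polynomial.X - 1 : Polynomial ℂ)) ^ d).coeff j = (-1) ^ (d - j) * (d.choose j : ℂ) := by
  have h : (Polynomial.X - 1 : Polynomial ℂ) = Polynomial.X + Polynomial.C (-1) := by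
    simp [sub_eq_add_neg]
  rw [h, Polynomial.coeff_X_add_C_pow]

lemma ffmul_coeff (d : ℕ) (q r : Polynomial ℂ) {i : ℕ} (hi : i ≤ d) :
    (ffmul d q r).coeff (d - i) = (-1) ^ i * (d.choose i : ℂ) * atilde d q i * atilde d r i := by
  rw [ffmul, Polynomial.finset_sum_coeff]
  rw [Finset.sum_eq_single i]
  · rw [Polynomial.coeff_C_mul, Polynomial.coeff_X_pow, if_pos rfl, mul_one]
  · intro b hb hbi
    rw [Finset.mem_range] at hb
    rw [Polynomial.coeff_C_mul, Polynomial.coeff_X_pow, if_neg (by omega), mul_zero]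
  · intro h
    exact absurd (Finset.mem_range.2 (by omega)) h

lemma ffmul_coeff_high (d : ℕ) (q r : Polynomial ℂ) {j : ℕ} (hj : d < j) :
    (ffmul d q r).coeff j = 0 := by
  rw [ffmul, Polynomial.finset_sum_coeff]
  apply Finset.sum_eq_zero
  intro b _
  rw [Polynomial.coeff_C_mul, Polynomial.coeff_X_pow, if_neg (by omega), mul_zero]

lemma atilde_ffmul (d : ℕ) (q r : Polynomial ℂ) {i : ℕ} (hi : i ≤ d) :
    atilde d (ffmul d q r) i = atilde d q i * atilde d r i := by
  rw [atilde, ffmul_coeff d q r hi]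
  have hC : ((d.choose i : ℂ)) ≠ 0 := by
    exact_mod_cast Nat.cast_ne_zero.2 (Nat.choose_pos hi).ne'
  have hsign : ((-1 : ℂ)) ^ i * (-1) ^ i = 1 := by
    rw [← mul_pow]; norm_num
  field_simp
  rw [sq, hsign, one_mul]

lemma atilde_X_sub_one_pow (d : ℕ) {i : ℕ} (hi : i ≤ d) :
    atilde d ((Polynomial.X - 1) ^ d) i = 1 := by
  rw [atilde, coeff_X_sub_one_pow, Nat.sub_sub_self hi, Nat.choose_symm hi]
  have hC : ((d.choose i : ℂ)) ≠ 0 := by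
    exact_mod_cast Nat.cast_ne_zero.2 (Nat.choose_pos hi).ne'
  field_simp
  rw [sq, ← mul_pow]
  norm_num

lemma atilde_ffpow (d : ℕ) (p : Polynomial ℂ) (m : ℕ) {i : ℕ} (hi : i ≤ d) :
    atilde d (ffpow d p m) i = (atilde d p i) ^ m := by
  induction m with
  | zero => rw [ffpow, atilde_X_sub_one_pow d hi, pow_zero]
  | succ m IH => rw [ffpow, atilde_ffmul d _ p hi, IH, pow_succ]

lemma ffpow_coeff (d : ℕ) (p : Polynomial ℂ) (m : ℕ) {j : ℕ} (hj : j ≤ d) :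
    (ffpow d p m).coeff j = (-1) ^ (d - j) * (d.choose (d - j) : ℂ) * (atilde d p (d - j)) ^ m := by
  rcases m with _ | m
  · rw [ffpow, coeff_X_sub_one_pow, Nat.choose_symm hj, pow_zero, mul_one]
  · rw [ffpow]
    have hdj : d - j ≤ d := by omega
    have hjj : j = d - (d - j) := by omega
    conv_lhs => rw [hjj]
    rw [ffmul_coeff d _ p hdj, atilde_ffpow d p m hdj, pow_succ]
    ring

lemma ffpow_coeff_high (d : ℕ) (p : Polynomial ℂ) (m : ℕ) {j : ℕ} (hj : d < j) :
    (ffpow d p m).coeff j = 0 := by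
  rcases m with _ | m
  · rw [ffpow, coeff_X_sub_one_pow, Nat.choose_eq_zero_of_lt hj]
    simp
  · rw [ffpow]
    exact ffmul_coeff_high d _ p hj

lemma ffmul_one_one (d : ℕ) :
    ffmul d ((Polynomial.X - 1) ^ d) ((Polynomial.X - 1) ^ d) = (Polynomial.X - 1) ^ d := by
  apply Polynomial.ext
  intro j
  rcases le_or_gt j d with hj | hj
  · have hdj : d - j ≤ d := by omega
    have hjj : j = d - (d - j) := by omega
    conv_lhs => rw [hjj]
    rw [ffmul_coeff d _ _ hdj, atilde_X_sub_one_pow d hdj,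
      coeff_X_sub_one_pow, Nat.choose_symm hj]
    ring
  · rw [ffmul_coeff_high d _ _ hj, coeff_X_sub_one_pow, Nat.choose_eq_zero_of_lt hj]
    simp

lemma esymm_replicate_one (d i : ℕ) : (Multiset.replicate d (1:ℝ)).esymm i = (d.choose i : ℝ) := by
  rw [Multiset.esymm]
  have h : ∀ x ∈ (Multiset.replicate d (1:ℝ)).powersetCard i, x.prod = 1 := by
    intro x hx
    rw [Multiset.mem_powersetCard] at hx
    obtain ⟨hle, hc⟩ := hx
    have : ∀ b ∈ x, b = (1:ℝ) := fun b hb => Multiset.eq_of_mem_replicate (Multiset.mem_of_le hle hb)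
    rw [Multiset.eq_replicate_card.2 this, Multiset.prod_replicate, one_pow]
  rw [Multiset.map_congr rfl h]
  rw [Multiset.map_const', Multiset.sum_replicate, Multiset.card_powersetCard,
    Multiset.card_replicate]
  simp

open scoped ComplexOrder in
theorem statement9 (d : ℕ) (hd : 1 ≤ d) (p : Polynomial ℂ) (lam : Fin d → ℝ)
    (hlam : ∀ i, 0 ≤ lam i)
    (hp : p = ∏ i, (Polynomial.X - Polynomial.C ((lam i : ℝ) : ℂ))) :
    (atilde d p 1 < 1 →
      ∀ j, Tendsto (fun m => (ffpow d p m).coeff j) atTop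
        (nhds ((Polynomial.X ^ d : Polynomial ℂ).coeff j))) ∧
    (atilde d p 1 = 1 → atilde d p 2 < 1 →
      ∀ j, Tendsto (fun m => (ffpow d p m).coeff j) atTop
        (nhds ((Polynomial.X ^ d -
          Polynomial.C (d : ℂ) * Polynomial.X ^ (d - 1)).coeff j))) ∧
    (atilde d p 1 = 1 → atilde d p 2 = 1 →
      p = (Polynomial.X - 1) ^ d ∧ ∀ m, ffpow d p m = (Polynomial.X - 1) ^ d) := by
  have hdR : (0:ℝ) < (d:ℝ) := by exact_mod_cast hd
  set sR : Multiset ℝ := Multiset.map lam Finset.univ.val with hsR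
  have hcard : Multiset.card sR = d := by
    rw [hsR, Multiset.card_map]
    simp
  have hnonneg : ∀ x ∈ sR, 0 ≤ x := by
    intro x hx
    rw [hsR, Multiset.mem_map] at hx
    obtain ⟨i, _, rfl⟩ := hx
    exact hlam i
  have hsum_s : sR.sum = ∑ i, lam i := by
    rw [hsR]
    rfl
  have hq_s : (sR.map (fun x => x^2)).sum = ∑ i, (lam i)^2 := by
    rw [hsR, Multiset.map_map]
    rfl
  have hpfact : p = ((sR.map (fun x : ℝ => (x:ℂ))).map
      (fun t => Polynomial.X - Polynomial.C t)).prod := by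
    rw [hp, hsR, Multiset.map_map, Multiset.map_map]
    rw [Finset.prod_eq_multiset_prod]
    rfl
  have hcoeff : ∀ i, i ≤ d → p.coeff (d - i) = (-1)^i * ((sR.esymm i : ℝ) : ℂ) := by
    intro i hi
    have hcards : Multiset.card (sR.map (fun x : ℝ => (x:ℂ))) = d := by
      rw [Multiset.card_map, hcard]
    have hk : d - i ≤ Multiset.card (sR.map fun x : ℝ => (x:ℂ)) := by rw [hcards]; omega
    rw [hpfact, Multiset.prod_X_sub_C_coeff _ hk, hcards, Nat.sub_sub_self hi, esymm_map_hom]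
  set ai : ℕ → ℝ := fun i => sR.esymm i / (d.choose i) with hai
  have hatilde : ∀ i, i ≤ d → atilde d p i = ((ai i : ℝ) : ℂ) := by
    intro i hi
    have hsign : ((-1:ℂ))^i * (-1)^i = 1 := by rw [← mul_pow]; norm_num
    rw [atilde, hcoeff i hi]
    calc (-1:ℂ)^i * ((d.choose i : ℂ))⁻¹ * ((-1)^i * ((sR.esymm i : ℝ):ℂ))
        = ((-1:ℂ)^i * (-1)^i) * (((sR.esymm i : ℝ):ℂ) * ((d.choose i : ℂ))⁻¹) := by ring
      _ = ((sR.esymm i : ℝ):ℂ) * ((d.choose i : ℂ))⁻¹ := by rw [hsign, one_mul]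
      _ = ((ai i : ℝ) : ℂ) := by
          rw [hai]
          push_cast
          rw [div_eq_mul_inv]
  have hai0 : ai 0 = 1 := by rw [hai]; simp [esymm_zero']
  have hai1 : ai 1 = sR.sum / d := by rw [hai]; simp [esymm_one']
  have hai_nonneg : ∀ i, 0 ≤ ai i := by
    intro i
    exact div_nonneg (esymm_nonneg hnonneg i) (by positivity)
  -- coefficients of targets
  have htarget1 : ∀ j, j < d → ((Polynomial.X ^ d : Polynomial ℂ)).coeff j = 0 := by
    intro j hj
    rw [Polynomial.coeff_X_pow, if_neg (by omega)]
  -- the three statements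
  refine ⟨?_, ?_, ?_⟩
  · -- case (i)
    intro h1 j
    have h1' : ai 1 < 1 := by
      rw [hatilde 1 hd] at h1
      rw [show (1:ℂ) = ((1:ℝ):ℂ) by norm_num] at h1
      exact Complex.real_lt_real.1 h1
    have hsumlt : sR.sum < d := by
      rw [hai1] at h1'
      exact (div_lt_one hdR).1 h1'
    have hlt : ∀ i, 1 ≤ i → i ≤ d → ai i < 1 := by
      intro i h1i hid
      have hm := maclaurin sR hnonneg i
      rw [hcard] at hm
      have hCpos : (0:ℝ) < (d.choose i : ℝ) := by exact_mod_cast Nat.choose_pos hid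
      have hdpow : (0:ℝ) < (d:ℝ)^i := by positivity
      have hspow : sR.sum ^ i < (d:ℝ)^i :=
        pow_lt_pow_left₀ hsumlt (Multiset.sum_nonneg hnonneg) (by omega)
      have h2 : sR.esymm i * (d:ℝ)^i < (d.choose i:ℝ) * (d:ℝ)^i :=
        lt_of_le_of_lt hm (by nlinarith)
      have h3 : sR.esymm i < (d.choose i:ℝ) := lt_of_mul_lt_mul_right h2 hdpow.le
      rw [hai]
      exact (div_lt_one hCpos).2 h3
    rcases lt_trichotomy j d with hj | hj | hj
    · rw [htarget1 j hj]
      have heq : (fun m => (ffpow d p m).coeff j)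
          = fun m => (((-1:ℂ))^(d-j) * (d.choose (d-j):ℂ)) * (((ai (d-j) : ℝ):ℂ))^m := by
        funext m
        rw [ffpow_coeff d p m hj.le, hatilde (d-j) (by omega)]
      rw [heq]
      have hnorm : ‖((ai (d-j) : ℝ):ℂ)‖ < 1 := by
        rw [Complex.norm_real, Real.norm_eq_abs, abs_of_nonneg (hai_nonneg _)]
        exact hlt (d-j) (by omega) (by omega)
      simpa using (tendsto_pow_atTop_nhds_zero_of_norm_lt_one hnorm).const_mul
        (((-1:ℂ))^(d-j) * (d.choose (d-j):ℂ))
    · rw [hj]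
      have heq : (fun m => (ffpow d p m).coeff d) = fun _ => (1:ℂ) := by
        funext m
        rw [ffpow_coeff d p m le_rfl, Nat.sub_self, hatilde 0 (by omega), hai0]
        simp
      rw [heq, Polynomial.coeff_X_pow, if_pos rfl]
      exact tendsto_const_nhds
    · have heq : (fun m => (ffpow d p m).coeff j) = fun _ => (0:ℂ) := by
        funext m
        exact ffpow_coeff_high d p m hj
      rw [heq, Polynomial.coeff_X_pow, if_neg (by omega)]
      exact tendsto_const_nhds
  · -- case (ii)
    intro h1 h2 j
    have h1' : ai 1 = 1 := by
      rw [hatilde 1 hd] at h1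
      rw [show (1:ℂ) = ((1:ℝ):ℂ) by norm_num] at h1
      exact_mod_cast h1
    have hsumd : sR.sum = (d:ℝ) := by
      rw [hai1] at h1'
      field_simp at h1'
      linarith
    have hlt2 : ∀ i, 2 ≤ i → i ≤ d → ai i < 1 := by
      intro i hi2 hid
      have hd2 : 2 ≤ d := le_trans hi2 hid
      have h2' : ai 2 < 1 := by
        rw [hatilde 2 hd2] at h2
        rw [show (1:ℂ) = ((1:ℝ):ℂ) by norm_num] at h2
        exact Complex.real_lt_real.1 h2
      have hC2pos : (0:ℝ) < (d.choose 2 : ℝ) := by exact_mod_cast Nat.choose_pos hd2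
      have hesym2 : sR.esymm 2 < (d.choose 2:ℝ) := by
        rw [hai] at h2'
        exact (div_lt_one hC2pos).1 h2'
      have hexists : ∃ a ∈ sR, a ≠ 1 := by
        by_contra hcon
        push_neg at hcon
        have : sR = Multiset.replicate d (1:ℝ) :=
          Multiset.eq_replicate.2 ⟨hcard, hcon⟩
        rw [this, esymm_replicate_one] at hesym2
        exact lt_irrefl _ hesym2
      obtain ⟨a, has, ha1⟩ := hexists
      have hstrict := maclaurin_strict sR hnonneg d hcard hsumd has ha1 hi2 hid
      have hCpos : (0:ℝ) < (d.choose i : ℝ) := by exact_mod_cast Nat.choose_pos hid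
      rw [hai]
      exact (div_lt_one hCpos).2 hstrict
    have htcoeff : ∀ k, (Polynomial.X ^ d -
        Polynomial.C (d : ℂ) * Polynomial.X ^ (d - 1)).coeff k
        = (if k = d then 1 else 0) - (d:ℂ) * (if k = d - 1 then 1 else 0) := by
      intro k
      rw [Polynomial.coeff_sub, Polynomial.coeff_X_pow, Polynomial.coeff_C_mul,
        Polynomial.coeff_X_pow]
    rcases lt_trichotomy j d with hj | hj | hj
    · by_cases hj1 : j = d - 1
      · subst hj1
        have hi1 : d - (d-1) = 1 := by omega
        have heq : (fun m => (ffpow d p m).coeff (d-1)) = fun _ => (-(d:ℂ)) := by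
          funext m
          rw [ffpow_coeff d p m (by omega), hi1, hatilde 1 hd, h1']
          simp
        rw [heq, htcoeff, if_neg (by omega), if_pos rfl]
        simpa using tendsto_const_nhds
      · have hi2' : 2 ≤ d - j := by omega
        have heq : (fun m => (ffpow d p m).coeff j)
            = fun m => (((-1:ℂ))^(d-j) * (d.choose (d-j):ℂ)) * (((ai (d-j) : ℝ):ℂ))^m := by
          funext m
          rw [ffpow_coeff d p m hj.le, hatilde (d-j) (by omega)]
        rw [heq, htcoeff, if_neg (by omega), if_neg hj1]
        have hnorm : ‖((ai (d-j) : ℝ):ℂ)‖ < 1 := by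
          rw [Complex.norm_real, Real.norm_eq_abs, abs_of_nonneg (hai_nonneg _)]
          exact hlt2 (d-j) hi2' (by omega)
        simpa using (tendsto_pow_atTop_nhds_zero_of_norm_lt_one hnorm).const_mul
          (((-1:ℂ))^(d-j) * (d.choose (d-j):ℂ))
    · rw [hj]
      have heq : (fun m => (ffpow d p m).coeff d) = fun _ => (1:ℂ) := by
        funext m
        rw [ffpow_coeff d p m le_rfl, Nat.sub_self, hatilde 0 (by omega), hai0]
        simp
      rw [heq, htcoeff, if_pos rfl, if_neg (by omega)]
      simpa using tendsto_const_nhds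
    · have heq : (fun m => (ffpow d p m).coeff j) = fun _ => (0:ℂ) := by
        funext m
        exact ffpow_coeff_high d p m hj
      rw [heq, htcoeff, if_neg (by omega), if_neg (by omega)]
      simpa using tendsto_const_nhds
  · -- case (iii)
    intro h1 h2
    rcases eq_or_lt_of_le hd with hd1 | hd2
    · exfalso
      rw [atilde] at h2
      rw [← hd1] at h2
      norm_num at h2
    have hd2' : 2 ≤ d := hd2
    have h1' : ai 1 = 1 := by
      rw [hatilde 1 hd] at h1
      rw [show (1:ℂ) = ((1:ℝ):ℂ) by norm_num] at h1
      exact_mod_cast h1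
    have hsumd : sR.sum = (d:ℝ) := by
      rw [hai1] at h1'
      field_simp at h1'
      linarith
    have h2' : ai 2 = 1 := by
      rw [hatilde 2 hd2'] at h2
      rw [show (1:ℂ) = ((1:ℝ):ℂ) by norm_num] at h2
      exact_mod_cast h2
    have hC2pos : (0:ℝ) < (d.choose 2 : ℝ) := by exact_mod_cast Nat.choose_pos hd2'
    have hesym2 : sR.esymm 2 = (d.choose 2:ℝ) := by
      rw [hai] at h2'
      field_simp at h2'
      exact h2'
    have hchoose2 : (d.choose 2 : ℝ) * 2 = (d:ℝ) * ((d:ℝ) - 1) := by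
      have h2n : 2 * (d.choose 2) = d * (d-1) := by
        rw [Nat.choose_two_right, Nat.mul_div_cancel']
        obtain ⟨e, rfl⟩ : ∃ e, d = e + 1 := ⟨d - 1, by omega⟩
        simpa [Nat.add_sub_cancel, mul_comm] using (Nat.even_mul_succ_self e).two_dvd
      have := congrArg (Nat.cast (R := ℝ)) h2n
      push_cast [Nat.cast_sub hd] at this
      linarith
    have hq : (sR.map (fun x => x^2)).sum = (d:ℝ) := by
      have hsq := sq_sum_esymm sR
      rw [hsumd, hesym2] at hsq
      nlinarith [hsq, hchoose2]
    have hzero : ∑ i : Fin d, (lam i - 1)^2 = 0 := by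
      have hexp : ∑ i : Fin d, (lam i - 1)^2
          = (∑ i, (lam i)^2) - 2*(∑ i, lam i) + (d:ℝ) := by
        rw [Finset.sum_congr rfl (fun i _ => by ring :
          ∀ i ∈ Finset.univ, (lam i - 1)^2 = (lam i)^2 - 2*lam i + 1)]
        rw [Finset.sum_add_distrib, Finset.sum_sub_distrib, ← Finset.mul_sum]
        simp [Finset.card_univ]
      rw [hexp, ← hq_s, hq, ← hsum_s, hsumd]
      ring
    have hall : ∀ i, lam i = 1 := by
      intro i
      have hterm := (Finset.sum_eq_zero_iff_of_nonneg
        (fun i _ => sq_nonneg (lam i - 1))).1 hzero i (Finset.mem_univ i)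
      have : lam i - 1 = 0 := by
        nlinarith [hterm]
      linarith
    have hp1 : p = (Polynomial.X - 1) ^ d := by
      rw [hp]
      have : ∀ i : Fin d, (Polynomial.X - Polynomial.C ((lam i : ℝ) : ℂ))
          = (Polynomial.X - 1 : Polynomial ℂ) := by
        intro i
        rw [hall i]
        norm_num
      rw [Finset.prod_congr rfl (fun i _ => this i), Finset.prod_const, Finset.card_univ]
      simp
    refine ⟨hp1, ?_⟩
    intro m
    induction m with
    | zero => rfl
    | succ m IH =>
      show ffmul d (ffpow d p m) p = (Polynomial.X - 1) ^ d
      rw [IH, hp1]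
      exact ffmul_one_one d
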